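/- Let J be a finite set with probability weight function w, let B be a finite set, f : J → B a map, and θ an equivalence relation on J. For each θ-block u, let w(u,b) = ∑_{v ∈ u, f(v)=b} w(v), w(u) = ∑_b w(u,b), and w^maj(u) = max_b w(u,b). For each block u independently, choose a random value F(u) ∈ B where F(u) = f(v) for v chosen from u with probability w(v)/w(u). Define dist(f,F) = ∑_u ∑_{v ∈ u, f(v) ≠ F(u)} w(v). Then E[dist(f,F)] ≤ ∑_u 2(w(u) − w^maj(u)). -/

import Mathlib

open scoped Classical
open Finset

/-- sampling a representative value independently in each θ-block
(with probability proportional to weight) yields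
`E[dist(f,F)] ≤ ∑_u 2(w(u) − w^maj(u))`.  By linearity of expectation the
expected distance is `∑_u ∑_b (w(u,b)/w(u)) · ∑_{v∈u, f v ≠ b} w v`. -/
theorem expected_majority_sampling_distance {J B : Type} [Fintype J] [Fintype B]
    (s : Setoid J) [Fintype (Quotient s)]
    (w : J → ℝ) (hw0 : ∀ v, 0 ≤ w v) (hw1 : ∑ v, w v = 1)
    (f : J → B)
    (wub : Quotient s → B → ℝ)
    (hwub : ∀ u b, wub u b = ∑ v, if Quotient.mk s v = u ∧ f v = b then w v else 0)
    (wu : Quotient s → ℝ) (hwu : ∀ u, wu u = ∑ b, wub u b)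
    (hpos : ∀ u, 0 < wu u)
    (fmaj : Quotient s → B) (hfmaj : ∀ u b, wub u b ≤ wub u (fmaj u)) :
    (∑ u : Quotient s, ∑ b : B, (wub u b / wu u) *
        (∑ v, if Quotient.mk s v = u ∧ f v ≠ b then w v else 0)) ≤
      ∑ u : Quotient s, 2 * (wu u - wub u (fmaj u)) := by
  apply Finset.sum_le_sum
  intro u _
  have hwpos := hpos u
  have hnn : ∀ b, 0 ≤ wub u b := by
    intro b
    rw [hwub]
    apply Finset.sum_nonneg
    intro v _
    split
    · exact hw0 v
    · rfl
  have hblock : (∑ v, if Quotient.mk s v = u then w v else 0) = wu u := by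
    rw [hwu]
    have : ∀ b, wub u b = ∑ v, if Quotient.mk s v = u ∧ f v = b then w v else 0 := hwub u
    simp only [this]
    rw [Finset.sum_comm]
    apply Finset.sum_congr rfl
    intro v _
    by_cases h1 : Quotient.mk s v = u
    · simp [h1]
    · simp [h1]
  have key : ∀ b, (∑ v, if Quotient.mk s v = u ∧ f v ≠ b then w v else 0) = wu u - wub u b := by
    intro b
    have h : (∑ v, if Quotient.mk s v = u ∧ f v ≠ b then w v else 0) + wub u b = wu u := by
      rw [hwub, ← Finset.sum_add_distrib, ← hblock]
      apply Finset.sum_congr rfl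
      intro v _
      by_cases h1 : Quotient.mk s v = u
      · by_cases h2 : f v = b <;> simp [h1, h2]
      · simp [h1]
    linarith
  calc (∑ b : B, wub u b / wu u * (∑ v, if Quotient.mk s v = u ∧ f v ≠ b then w v else 0))
      = ∑ b : B, (wub u b - wub u b * wub u b / wu u) := by
        apply Finset.sum_congr rfl
        intro b _
        rw [key b]
        field_simp
    _ = wu u - (∑ b : B, wub u b * wub u b) / wu u := by
        rw [Finset.sum_sub_distrib, ← hwu, ← Finset.sum_div]
    _ ≤ 2 * (wu u - wub u (fmaj u)) := by
        have hS : wub u (fmaj u) * wub u (fmaj u) ≤ ∑ b : B, wub u b * wub u b :=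
          Finset.single_le_sum (f := fun b => wub u b * wub u b) (fun b _ => mul_self_nonneg _) (Finset.mem_univ (fmaj u))
        have h1 : (2 * wub u (fmaj u) - wu u) * wu u ≤ ∑ b : B, wub u b * wub u b := by
          nlinarith [sq_nonneg (wub u (fmaj u) - wu u)]
        have h2 : 2 * wub u (fmaj u) - wu u ≤ (∑ b : B, wub u b * wub u b) / wu u :=
          (le_div_iff₀ hwpos).2 h1
        linarith
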